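/- Let K be a commutative ring, A a unital K-algebra, Δ ∈ A a well-tempered element, and B = Â_Δ the unital homotope. Regard A as a left B-module via ψ₁ (b acts by left multiplication by ψ₁(b) in A). Then the map A^op → End_B(A), sending a ∈ A to the operator of right multiplication by a on A, is an isomorphism of K-algebras (and of A-bimodules). -/

import Mathlib

open scoped TensorProduct

noncomputable section

universe u v

/-! ### The homotope of an algebra at an element -/

variable (K : Type v) [CommRing K] (A : Type u) [Ring A] [Algebra K A]

/-- The (non-unital) homotope of a ring `A` at an element `Δ`: the same underlying
additive group, with multiplication `a ∘ b = a * Δ * b`. -/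
@[ext]
structure Homotope {A : Type u} [Ring A] (Δ : A) : Type u where
  /-- the underlying element of `A` -/
  val : A

namespace Homotope

variable {A} (Δ : A)

theorem val_injective : Function.Injective (Homotope.val (Δ := Δ)) := fun a b h => by
  cases a; cases b; cases h; rfl

instance : Zero (Homotope Δ) := ⟨⟨0⟩⟩
instance : Add (Homotope Δ) := ⟨fun x y => ⟨x.val + y.val⟩⟩
instance : Neg (Homotope Δ) := ⟨fun x => ⟨-x.val⟩⟩
instance : Sub (Homotope Δ) := ⟨fun x y => ⟨x.val - y.val⟩⟩
instance : SMul ℕ (Homotope Δ) := ⟨fun n x => ⟨n • x.val⟩⟩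
instance : SMul ℤ (Homotope Δ) := ⟨fun n x => ⟨n • x.val⟩⟩
instance : Mul (Homotope Δ) := ⟨fun x y => ⟨x.val * Δ * y.val⟩⟩
instance : SMul K (Homotope Δ) := ⟨fun k x => ⟨k • x.val⟩⟩

@[simp] theorem zero_val : (0 : Homotope Δ).val = 0 := rfl
@[simp] theorem add_val (x y : Homotope Δ) : (x + y).val = x.val + y.val := rfl
@[simp] theorem neg_val (x : Homotope Δ) : (-x).val = -x.val := rfl
@[simp] theorem sub_val (x y : Homotope Δ) : (x - y).val = x.val - y.val := rfl
@[simp] theorem mul_val (x y : Homotope Δ) : (x * y).val = x.val * Δ * y.val := rfl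
@[simp] theorem smul_val (k : K) (x : Homotope Δ) : (k • x).val = k • x.val := rfl

instance : AddCommGroup (Homotope Δ) :=
  (val_injective Δ).addCommGroup Homotope.val rfl (fun _ _ => rfl) (fun _ => rfl)
    (fun _ _ => rfl) (fun _ _ => rfl) (fun _ _ => rfl)

instance : NonUnitalRing (Homotope Δ) :=
  { (inferInstance : AddCommGroup (Homotope Δ)),
    (inferInstance : Mul (Homotope Δ)) with
    left_distrib := fun x y z => by ext; simp [mul_add]
    right_distrib := fun x y z => by ext; simp [add_mul]
    zero_mul := fun x => by ext; simp
    mul_zero := fun x => by ext; simp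
    mul_assoc := fun x y z => by ext; simp [mul_assoc] }

/-- the projection to `A` as an additive map -/
def valAddHom : Homotope Δ →+ A :=
  { toFun := Homotope.val, map_zero' := rfl, map_add' := fun _ _ => rfl }

instance : Module K (Homotope Δ) :=
  (val_injective Δ).module K (valAddHom Δ) (fun _ _ => rfl)

instance : IsScalarTower K (Homotope Δ) (Homotope Δ) :=
  ⟨fun k x y => by ext; simp [smul_mul_assoc]⟩

instance : SMulCommClass K (Homotope Δ) (Homotope Δ) :=
  ⟨fun k x y => by ext; simp [mul_smul_comm]⟩

end Homotope

/-- The unital homotope of `A` at `Δ`, obtained from the non-unital homotope by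
adjoining a unit: `B = K·1 ⊕ A_Δ`. -/
abbrev UnitalHomotope (Δ : A) : Type _ := Unitization K (Homotope Δ)

namespace UnitalHomotope

variable (Δ : A)

/-- The non-unital algebra map `A_Δ → A`, `a ↦ a·Δ`. -/
def phi1 : Homotope Δ →ₙₐ[K] A :=
  { toFun := fun x => x.val * Δ
    map_smul' := fun k x => smul_mul_assoc k x.val Δ
    map_zero' := zero_mul Δ
    map_add' := fun x y => add_mul x.val y.val Δ
    map_mul' := fun x y => mul_assoc (x.val * Δ) y.val Δ }

/-- The non-unital algebra map `A_Δ → A`, `a ↦ Δ·a`. -/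
def phi2 : Homotope Δ →ₙₐ[K] A :=
  { toFun := fun x => Δ * x.val
    map_smul' := fun k x => mul_smul_comm k Δ x.val
    map_zero' := mul_zero Δ
    map_add' := fun x y => mul_add Δ x.val y.val
    map_mul' := fun x y => by
      show Δ * (x.val * Δ * y.val) = Δ * x.val * (Δ * y.val)
      simp [mul_assoc] }

/-- The algebra homomorphism `ψ₁ : B → A`, determined by `a ↦ a·Δ` on `B⁺ = A`. -/
def psi1 : UnitalHomotope K A Δ →ₐ[K] A := Unitization.lift (phi1 K A Δ)

/-- The algebra homomorphism `ψ₂ : B → A`, determined by `a ↦ Δ·a` on `B⁺ = A`. -/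
def psi2 : UnitalHomotope K A Δ →ₐ[K] A := Unitization.lift (phi2 K A Δ)

/-- The augmentation `B → K` of the unital homotope. -/
def aug : UnitalHomotope K A Δ →ₐ[K] K := Unitization.fstHom K (Homotope Δ)

/-- The augmentation ideal `B⁺ ⊆ B`, as a left ideal (hence a left `B`-module). -/
def plusLeft : Ideal (UnitalHomotope K A Δ) := RingHom.ker (aug K A Δ).toRingHom

/-- The augmentation, as a ring homomorphism on the opposite algebra. -/
def augOp : (UnitalHomotope K A Δ)ᵐᵒᵖ →+* K :=
  RingHom.fromOpposite (aug K A Δ).toRingHom (fun x y => Commute.all _ _)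

/-- The augmentation ideal `B⁺`, as a left ideal of `Bᵐᵒᵖ`, i.e. as a right `B`-module. -/
def plusRight : Ideal (UnitalHomotope K A Δ)ᵐᵒᵖ := RingHom.ker (augOp K A Δ)

end UnitalHomotope

open UnitalHomotope

/-- An element `Δ` of a `K`-algebra `A` is *well-tempered* if the two-sided ideal
generated by `Δ` is all of `A`, and the augmentation ideal `B⁺` of the unital homotope
`B = Â_Δ` is projective both as a left and as a right `B`-module. -/
def WellTempered (Δ : A) : Prop :=
  TwoSidedIdeal.span ({Δ} : Set A) = ⊤ ∧
    Module.Projective (UnitalHomotope K A Δ) (plusLeft K A Δ) ∧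
    Module.Projective (UnitalHomotope K A Δ)ᵐᵒᵖ (plusRight K A Δ)

namespace UnitalHomotope

variable {A} (Δ : A)

/-- `A` as a left module over the unital homotope `B = Â_Δ`, via `ψ₁`. -/
instance instModulePsi1 : Module (UnitalHomotope K A Δ) A :=
  Module.compHom A (psi1 K A Δ).toRingHom

theorem smul_def (b : UnitalHomotope K A Δ) (a : A) : b • a = psi1 K A Δ b * a := rfl

instance : SMulCommClass (UnitalHomotope K A Δ) K A :=
  ⟨fun b k a => mul_smul_comm k (psi1 K A Δ b) a⟩

instance : SMulCommClass K (UnitalHomotope K A Δ) A :=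
  ⟨fun k b a => (mul_smul_comm k (psi1 K A Δ b) a).symm⟩

instance : IsScalarTower K (UnitalHomotope K A Δ) A :=
  ⟨fun k b a => by
    rw [smul_def, smul_def, map_smul, smul_mul_assoc]⟩

end UnitalHomotope

end


section AuxProof

open UnitalHomotope

variable {K : Type v} [CommRing K] {A : Type u} [Ring A] [Algebra K A] (Δ : A)

lemma inr_smul_eq (x z : A) :
    ((Unitization.inr ⟨x⟩ : UnitalHomotope K A Δ)) • z = x * Δ * z := by
  rw [UnitalHomotope.smul_def]
  congr 1
  show psi1 K A Δ (Unitization.inr ⟨x⟩) = x * Δ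
  simp [psi1, phi1, Unitization.lift_apply]

lemma end_key (f : Module.End (UnitalHomotope K A Δ) A) (x z : A) :
    f (x * Δ * z) = x * Δ * f z := by
  rw [← inr_smul_eq (K := K) Δ x z, map_smul, inr_smul_eq]

lemma end_eq_rmul (hΔ : TwoSidedIdeal.span ({Δ} : Set A) = ⊤)
    (f : Module.End (UnitalHomotope K A Δ) A) (x : A) :
    f x = x * f 1 := by
  let I : TwoSidedIdeal A := TwoSidedIdeal.mk'
    { y : A | ∀ u z : A, f (u * y * z) = u * f (y * z) }
    (by intro u z; simp)
    (by intro a b ha hb u z; simp [mul_add, add_mul, ha u z, hb u z])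
    (by intro a ha u z; simpa [mul_add, add_mul, neg_mul, mul_neg] using ha u z)
    (by intro r y hy u z
        have h1 := hy (u * r) z
        have h2 := hy r z
        simp only [mul_assoc] at h1 h2 ⊢
        rw [h1, h2])
    (by intro y r hy u z
        have h1 := hy u (r * z)
        simp only [mul_assoc] at h1 ⊢
        rw [h1])
  have hΔI : Δ ∈ I := by
    rw [TwoSidedIdeal.mem_mk']
    intro u z
    have h1 := end_key Δ f u z
    have h2 := end_key Δ f 1 z
    simp only [one_mul] at h2
    rw [h1, h2, mul_assoc]
  have h1I : (1 : A) ∈ I := by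
    have : TwoSidedIdeal.span ({Δ} : Set A) ≤ I := by
      intro y hy
      exact TwoSidedIdeal.mem_span_iff.mp hy I (by simpa using hΔI)
    exact this (hΔ ▸ TwoSidedIdeal.mem_top _)
  rw [TwoSidedIdeal.mem_mk'] at h1I
  have := h1I x 1
  simpa using this

/-- Right multiplication as an algebra hom `Aᵐᵒᵖ →ₐ[K] End_B(A)`. -/
def rmulHom : Aᵐᵒᵖ →ₐ[K] Module.End (UnitalHomotope K A Δ) A where
  toFun a :=
    { toFun := fun x => x * a.unop
      map_add' := fun x y => add_mul x y a.unop
      map_smul' := fun b x => by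
        simp only [RingHom.id_apply, UnitalHomotope.smul_def, mul_assoc] }
  map_one' := by ext x; simp
  map_mul' a b := by ext x; simp [mul_assoc]
  map_zero' := by ext x; simp
  map_add' a b := by ext x; simp [mul_add]
  commutes' k := by
    ext x
    simp [Algebra.algebraMap_eq_smul_one, Module.algebraMap_end_apply, mul_smul_comm]

end AuxProof

open UnitalHomotope in
/-- If `Δ` is well-tempered and `A` is regarded as a left `B`-module via
`ψ₁`, then `a ↦ (right multiplication by a)` is an isomorphism of `K`-algebras
`A^op ≅ End_B(A)`. -/
theorem opAlgebra_iso_end {K : Type v} [CommRing K] {A : Type u} [Ring A] [Algebra K A]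
    (Δ : A) (h : WellTempered K A Δ) :
    ∃ e : Aᵐᵒᵖ ≃ₐ[K] Module.End (UnitalHomotope K A Δ) A,
      ∀ (a : Aᵐᵒᵖ) (x : A), e a x = x * a.unop := by
  have hbij : Function.Bijective (rmulHom (K := K) Δ) := by
    constructor
    · intro a b hab
      have := congrArg (fun f => f 1) hab
      simp only [rmulHom, AlgHom.coe_mk, RingHom.coe_mk, MonoidHom.coe_mk, OneHom.coe_mk,
        LinearMap.coe_mk, AddHom.coe_mk, one_mul] at this
      exact MulOpposite.unop_injective this
    · intro f
      refine ⟨MulOpposite.op (f 1), ?_⟩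
      ext x
      simp only [rmulHom, AlgHom.coe_mk, RingHom.coe_mk, MonoidHom.coe_mk, OneHom.coe_mk,
        LinearMap.coe_mk, AddHom.coe_mk, MulOpposite.unop_op]
      exact (end_eq_rmul Δ h.1 f x).symm
  exact ⟨AlgEquiv.ofBijective _ hbij, fun a x => rfl⟩
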